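/- Let (δ_{11,k})_{k≥1} and (δ_{12,k})_{k≥1} be complex sequences with ∑_k |δ_{11,k}| < ∞ and ∑_k |δ_{12,k}| < ∞, let M_k be the 2×2 complex matrix with rows (1 + δ_{11,k}, δ_{12,k}) and (1, 0), and let R_k = M_k M_{k+1} ⋯ be the infinite products (which exist). Define c_k = (R_k)_{21} for k ≥ 1 and c_0 = (R_1)_{11}. Then for every k ≥ 1 one has (R_k)_{11} = c_{k−1} (so that R_k applied to the vector (1,0) gives (c_{k−1}, c_k)), the sequence (c_k) satisfies the recurrence c_{k−1} = (1 + δ_{11,k}) c_k + δ_{12,k} c_{k+1} for every k ≥ 1, and c_k / c_{k−1} → 1 as k → ∞ (in particular c_k ≠ 0 for all sufficiently large k). -/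

import Mathlib

open Filter Topology Matrix Finset

/-- The ordered partial product `M k * M (k+1) * ⋯ * M (k+n)`. -/
def opProd {A : Type*} [Mul A] (M : ℕ → A) (k : ℕ) : ℕ → A
  | 0 => M k
  | n + 1 => opProd M k n * M (k + n + 1)

lemma opProd_succ_left {A : Type*} [Semigroup A] (M : ℕ → A) (k n : ℕ) :
    opProd M k (n + 1) = M k * opProd M (k + 1) n := by
  induction n with
  | zero => show M k * M (k + 0 + 1) = M k * M (k + 1); rw [Nat.add_zero]
  | succ n ih =>
      show opProd M k (n + 1) * M (k + (n + 1) + 1) = M k * (opProd M (k+1) n * M (k + 1 + n + 1))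
      have e : k + (n + 1) + 1 = k + 1 + n + 1 := by omega
      rw [ih, mul_assoc, e]

lemma key_tendsto (d11 d12 : ℕ → ℂ)
    (h11 : Summable fun k => ‖d11 k‖)
    (h12 : Summable fun k => ‖d12 k‖)
    (M : ℕ → Matrix (Fin 2) (Fin 2) ℂ)
    (hM : ∀ k, M k = !![1 + d11 k, d12 k; 1, 0])
    (R : ℕ → Matrix (Fin 2) (Fin 2) ℂ)
    (hR : ∀ k, Tendsto (fun m => opProd M k m) atTop (nhds (R k))) :
    Tendsto (fun k => R k 1 0) atTop (nhds 1) := by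
  set ε : ℕ → ℝ := fun j => ‖d11 j‖ + ‖d12 j‖ with hεdef
  have hε : Summable ε := h11.add h12
  have εnn : ∀ j, 0 ≤ ε j := fun j => add_nonneg (norm_nonneg _) (norm_nonneg _)
  set T : ℝ := ∑' j, ε j with hTdef
  have hT0 : 0 ≤ T := tsum_nonneg εnn
  set E : ℝ := Real.exp T with hEdef
  have hE0 : 0 < E := Real.exp_pos T
  have hE1 : 1 ≤ E := Real.one_le_exp hT0
  -- tails
  set t : ℕ → ℝ := fun k => ∑' j, ε (j + k) with htdef
  have hεk : ∀ k, Summable fun j => ε (j + k) := fun k => (summable_nat_add_iff k).mpr hε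
  have ht0 : ∀ k, 0 ≤ t k := fun k => tsum_nonneg (fun j => εnn _)
  have htail_le : ∀ k m, ∑ j ∈ range m, ε (k + j) ≤ t k := by
    intro k m
    have : ∑ j ∈ range m, ε (k + j) = ∑ j ∈ range m, ε (j + k) := by
      refine Finset.sum_congr rfl fun j _ => by rw [Nat.add_comm]
    rw [this]
    exact Summable.sum_le_tsum (range m) (fun j _ => εnn _) (hεk k)
  have htmono : ∀ k, t (k + 1) ≤ t k := by
    intro k
    have h1 := Summable.tsum_eq_zero_add (hεk k)
    have : t (k+1) = ∑' j, ε ((j + 1) + k) := by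
      refine tsum_congr fun j => by rw [show j + (k+1) = (j+1)+k by omega]
    rw [this] at *
    calc ∑' j, ε (j + 1 + k) ≤ ε (0 + k) + ∑' j, ε (j + 1 + k) :=
          le_add_of_nonneg_left (εnn _)
      _ = t k := h1.symm
  have htT : ∀ k, t k ≤ T := by
    intro k
    induction k with
    | zero => simp only [htdef]; exact le_of_eq (tsum_congr fun j => by rw [Nat.add_zero])
    | succ k ih => exact (htmono k).trans ih
  -- entry notation
  set u : ℕ → ℕ → ℂ := fun k m => opProd M k m 1 0 with hudef
  set w : ℕ → ℕ → ℂ := fun k m => opProd M k m 1 1 with hwdef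
  have hstep : ∀ k m, opProd M k (m+1) = opProd M k m * M (k+m+1) := fun _ _ => rfl
  have hu : ∀ k m, u k (m+1) = u k m * (1 + d11 (k+m+1)) + w k m := by
    intro k m
    show opProd M k (m+1) 1 0 = _
    rw [hstep, hM, Matrix.mul_apply, Fin.sum_univ_two]; simp [hudef, hwdef]
  have hw : ∀ k m, w k (m+1) = u k m * d12 (k+m+1) := by
    intro k m
    show opProd M k (m+1) 1 1 = _
    rw [hstep, hM, Matrix.mul_apply, Fin.sum_univ_two]; simp [hudef]
  have hu0 : ∀ k, u k 0 = 1 := fun k => by show M k 1 0 = 1; rw [hM]; simp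
  have hw0 : ∀ k, w k 0 = 0 := fun k => by show M k 1 1 = 0; rw [hM]; simp
  -- uniform bound
  have hsum : ∀ k m, ‖u k m‖ + ‖w k m‖ ≤ ∏ j ∈ range m, (1 + ε (k + 1 + j)) := by
    intro k m
    induction m with
    | zero => rw [hu0, hw0]; simp
    | succ m ih =>
        rw [Finset.prod_range_succ, hu, hw]
        have h1 : ‖u k m * (1 + d11 (k+m+1)) + w k m‖ ≤
            ‖u k m‖ * (1 + ‖d11 (k+m+1)‖) + ‖w k m‖ := by
          calc ‖u k m * (1 + d11 (k+m+1)) + w k m‖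
              ≤ ‖u k m * (1 + d11 (k+m+1))‖ + ‖w k m‖ := norm_add_le _ _
            _ ≤ ‖u k m‖ * (1 + ‖d11 (k+m+1)‖) + ‖w k m‖ := by
                rw [norm_mul]
                gcongr
                calc ‖1 + d11 (k+m+1)‖ ≤ ‖(1:ℂ)‖ + ‖d11 (k+m+1)‖ := norm_add_le _ _
                  _ = 1 + ‖d11 (k+m+1)‖ := by rw [norm_one]
        have h2 : ‖u k m * d12 (k+m+1)‖ = ‖u k m‖ * ‖d12 (k+m+1)‖ := norm_mul _ _
        have hprodnn : (0:ℝ) ≤ ∏ j ∈ range m, (1 + ε (k + 1 + j)) :=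
          Finset.prod_nonneg fun j _ => by positivity
        have e : k + 1 + m = k + m + 1 := by omega
        calc ‖u k m * (1 + d11 (k+m+1)) + w k m‖ + ‖u k m * d12 (k+m+1)‖
            ≤ ‖u k m‖ * (1 + ‖d11 (k+m+1)‖) + ‖w k m‖ + ‖u k m‖ * ‖d12 (k+m+1)‖ := by
              rw [h2]; linarith
          _ = (‖u k m‖ + ‖w k m‖) * (1 + ε (k+m+1)) - ‖w k m‖ * (ε (k+m+1)) := by
              simp only [hεdef]; ring
          _ ≤ (‖u k m‖ + ‖w k m‖) * (1 + ε (k+m+1)) := by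
              have : 0 ≤ ‖w k m‖ * ε (k+m+1) := mul_nonneg (norm_nonneg _) (εnn _)
              linarith
          _ ≤ (∏ j ∈ range m, (1 + ε (k + 1 + j))) * (1 + ε (k + 1 + m)) := by
              rw [e]
              have h1e : (0:ℝ) ≤ 1 + ε (k+m+1) := by positivity
              exact mul_le_mul_of_nonneg_right ih h1e
  have hprodE : ∀ k m, ∏ j ∈ range m, (1 + ε (k + 1 + j)) ≤ E := by
    intro k m
    calc ∏ j ∈ range m, (1 + ε (k + 1 + j))
        ≤ ∏ j ∈ range m, Real.exp (ε (k + 1 + j)) := by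
          refine Finset.prod_le_prod (fun j _ => by positivity)
            (fun j _ => by have := Real.add_one_le_exp (ε (k+1+j)); linarith)
      _ = Real.exp (∑ j ∈ range m, ε (k + 1 + j)) := (Real.exp_sum _ _).symm
      _ ≤ E := by
          rw [hEdef]
          exact Real.exp_le_exp.mpr ((htail_le (k+1) m).trans ((htT (k+1))))
  have hU : ∀ k m, ‖u k m‖ ≤ E := fun k m =>
    (le_add_of_nonneg_right (norm_nonneg (w k m))).trans
      ((hsum k m).trans (hprodE k m))
  have hW : ∀ k m, ‖w k m‖ ≤ E * ε (k + m) := by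
    intro k m
    match m with
    | 0 => rw [hw0]; simp; positivity
    | m+1 =>
        rw [hw]
        calc ‖u k m * d12 (k+m+1)‖ = ‖u k m‖ * ‖d12 (k+m+1)‖ := norm_mul _ _
          _ ≤ E * ‖d12 (k+m+1)‖ := mul_le_mul_of_nonneg_right (hU k m) (norm_nonneg _)
          _ ≤ E * ε (k + (m+1)) := by
              have : ‖d12 (k+m+1)‖ ≤ ε (k+m+1) := le_add_of_nonneg_left (norm_nonneg _)
              have e : k + (m+1) = k + m + 1 := by omega
              rw [e]
              exact mul_le_mul_of_nonneg_left this hE0.le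
  have hdiff : ∀ k m, ‖u k (m+1) - u k m‖ ≤ E * (ε (k+m+1) + ε (k+m)) := by
    intro k m
    have : u k (m+1) - u k m = u k m * d11 (k+m+1) + w k m := by rw [hu]; ring
    rw [this]
    calc ‖u k m * d11 (k+m+1) + w k m‖ ≤ ‖u k m * d11 (k+m+1)‖ + ‖w k m‖ := norm_add_le _ _
      _ ≤ E * ε (k+m+1) + E * ε (k+m) := by
          refine add_le_add ?_ (hW k m)
          rw [norm_mul]
          calc ‖u k m‖ * ‖d11 (k+m+1)‖ ≤ E * ‖d11 (k+m+1)‖ :=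
                mul_le_mul_of_nonneg_right (hU k m) (norm_nonneg _)
            _ ≤ E * ε (k+m+1) :=
                mul_le_mul_of_nonneg_left (le_add_of_nonneg_right (norm_nonneg _)) hE0.le
      _ = E * (ε (k+m+1) + ε (k+m)) := by ring
  have hnear : ∀ k m, ‖u k m - 1‖ ≤ E * (t k + t k) := by
    intro k m
    have key : ∀ m, ‖u k m - 1‖ ≤
        E * ((∑ j ∈ range m, ε (k + (j+1))) + ∑ j ∈ range m, ε (k + j)) := by
      intro m
      induction m with
      | zero => rw [hu0]; simp
      | succ m ih =>
          calc ‖u k (m+1) - 1‖ ≤ ‖u k (m+1) - u k m‖ + ‖u k m - 1‖ := by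
                have : u k (m+1) - 1 = (u k (m+1) - u k m) + (u k m - 1) := by ring
                rw [this]; exact norm_add_le _ _
            _ ≤ E * (ε (k+m+1) + ε (k+m)) +
                E * ((∑ j ∈ range m, ε (k + (j+1))) + ∑ j ∈ range m, ε (k + j)) :=
                add_le_add (hdiff k m) ih
            _ = E * ((∑ j ∈ range (m+1), ε (k + (j+1))) + ∑ j ∈ range (m+1), ε (k + j)) := by
                rw [Finset.sum_range_succ, Finset.sum_range_succ]
                have e : k + (m+1) = k + m + 1 := by omega
                rw [e]; ring
    refine (key m).trans ?_
    have h1 : ∑ j ∈ range m, ε (k + (j+1)) ≤ t k := by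
      have : ∑ j ∈ range m, ε (k + (j+1)) = ∑ j ∈ range m, ε ((k+1) + j) := by
        refine Finset.sum_congr rfl fun j _ => by rw [show k + (j+1) = (k+1)+j by omega]
      rw [this]
      exact (htail_le (k+1) m).trans (htmono k)
    have h2 := htail_le k m
    have := add_le_add h1 h2
    exact mul_le_mul_of_nonneg_left this hE0.le
  -- pass to the limit in m
  have hRbound : ∀ k, ‖R k 1 0 - 1‖ ≤ E * (t k + t k) := by
    intro k
    have hconv : Tendsto (fun m => u k m) atTop (nhds (R k 1 0)) := by
      have h1 : Continuous fun A : Matrix (Fin 2) (Fin 2) ℂ => A 1 0 :=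
        (continuous_apply (0 : Fin 2)).comp (continuous_apply (1 : Fin 2))
      exact (h1.tendsto _).comp (hR k)
    have : Tendsto (fun m => ‖u k m - 1‖) atTop (nhds ‖R k 1 0 - 1‖) :=
      ((continuous_norm.tendsto _).comp ((hconv.sub_const 1)))
    exact le_of_tendsto this (Eventually.of_forall fun m => hnear k m)
  -- squeeze
  have htzero : Tendsto t atTop (nhds 0) := by
    simpa [htdef] using (tendsto_sum_nat_add ε)
  have hbndzero : Tendsto (fun k => E * (t k + t k)) atTop (nhds 0) := by
    have := ((htzero.add htzero).const_mul E)
    simpa using this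
  rw [show (1:ℂ) = 1 from rfl, tendsto_iff_norm_sub_tendsto_zero]
  exact squeeze_zero (fun k => norm_nonneg _) (fun k => hRbound k) hbndzero

/-- Let `M k = !![1 + δ₁₁ k, δ₁₂ k; 1, 0]` with `∑ |δ₁₁ k| < ∞`, `∑ |δ₁₂ k| < ∞`, and let
`R k` be the infinite products `M k * M (k+1) * ⋯`. Put `c k = (R k)₂₁` for `k ≥ 1` and
`c 0 = (R 1)₁₁`. Then `(R k)₁₁ = c (k-1)` for all `k ≥ 1` (so `R k` applied to `(1,0)` gives
`(c (k-1), c k)`), the sequence `c` satisfies the recurrence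
`c (k-1) = (1 + δ₁₁ k) * c k + δ₁₂ k * c (k+1)` for all `k ≥ 1`, and `c (k+1) / c k → 1`
(in particular `c k ≠ 0` for all sufficiently large `k`). -/
theorem inf_product_two_by_two_solution
    (d11 d12 : ℕ → ℂ)
    (h11 : Summable fun k => ‖d11 k‖)
    (h12 : Summable fun k => ‖d12 k‖)
    (M : ℕ → Matrix (Fin 2) (Fin 2) ℂ)
    (hM : ∀ k, M k = !![1 + d11 k, d12 k; 1, 0])
    (R : ℕ → Matrix (Fin 2) (Fin 2) ℂ)
    (hR : ∀ k, Tendsto (fun m => opProd M k m) atTop (nhds (R k)))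
    (c : ℕ → ℂ) (hc0 : c 0 = R 1 0 0)
    (hck : ∀ k, 1 ≤ k → c k = R k 1 0) :
    (∀ k : ℕ, 1 ≤ k → R k 0 0 = c (k - 1)) ∧
    (∀ k : ℕ, 1 ≤ k → c (k - 1) = (1 + d11 k) * c k + d12 k * c (k + 1)) ∧
    Tendsto (fun k => c (k + 1) / c k) atTop (nhds 1) ∧
    (∃ N : ℕ, ∀ k ≥ N, c k ≠ 0) := by
  have hrel : ∀ k, R k = M k * R (k + 1) := by
    intro k
    have h1 : Tendsto (fun m => opProd M k (m + 1)) atTop (nhds (R k)) :=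
      (hR k).comp (tendsto_add_atTop_nat 1)
    have h2 : Tendsto (fun m => M k * opProd M (k + 1) m) atTop (nhds (M k * R (k + 1))) :=
      (hR (k + 1)).const_mul (M k)
    have h3 : (fun m => opProd M k (m + 1)) = fun m => M k * opProd M (k + 1) m :=
      funext fun m => opProd_succ_left M k m
    rw [h3] at h1
    exact tendsto_nhds_unique h1 h2
  have hR10 : ∀ k, R k 1 0 = R (k + 1) 0 0 := by
    intro k; rw [hrel k, hM, Matrix.mul_apply, Fin.sum_univ_two]; simp
  have hR00 : ∀ k, R k 0 0 = (1 + d11 k) * R (k + 1) 0 0 + d12 k * R (k + 1) 1 0 := by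
    intro k; rw [hrel k, hM, Matrix.mul_apply, Fin.sum_univ_two]; simp
  have part1 : ∀ k : ℕ, 1 ≤ k → R k 0 0 = c (k - 1) := by
    intro k hk
    match k, hk with
    | 1, _ => simpa using hc0.symm
    | (n + 2), _ =>
        have h1 : R (n + 2) 0 0 = R (n + 1) 1 0 := (hR10 (n + 1)).symm
        rw [h1, ← hck (n + 1) (by omega)]
        norm_num
  have part2 : ∀ k : ℕ, 1 ≤ k → c (k - 1) = (1 + d11 k) * c k + d12 k * c (k + 1) := by
    intro k hk
    have h2 : R (k + 1) 0 0 = c k := by rw [← hR10 k, ← hck k hk]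
    have h3 : R (k + 1) 1 0 = c (k + 1) := (hck (k + 1) (by omega)).symm
    rw [← part1 k hk, hR00 k, h2, h3]
  have hctend : Tendsto c atTop (nhds 1) := by
    have h := key_tendsto d11 d12 h11 h12 M hM R hR
    refine h.congr' ?_
    exact eventually_atTop.mpr ⟨1, fun k hk => (hck k hk).symm⟩
  refine ⟨part1, part2, ?_, ?_⟩
  · have hc1 : Tendsto (fun k => c (k + 1)) atTop (nhds 1) :=
      hctend.comp (tendsto_add_atTop_nat 1)
    simpa only [div_one, Pi.div_def] using hc1.div hctend one_ne_zero
  · obtain ⟨N, hN⟩ := eventually_atTop.mp (hctend.eventually_ne one_ne_zero)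
    exact ⟨N, hN⟩
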